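/- Let f: {0,1}^n → ℝ, let κ ∈ (1,2), let α > 0, and let d ≥ 1 be an integer. Let I = {i ∈ [n] : Inf^κ_i(f) ≥ α}. Then Σ_{S ⊆ [n], S ⊄ I, |S| ≤ d} f̂(S)² ≤ (κ−1)^{1−d} · α^{2/κ − 1} · Inf^κ(f). -/

import Mathlib

noncomputable section

/-- Expectation with respect to the uniform distribution on `{0,1}^n`. -/
def expect (n : ℕ) (g : (Fin n → Bool) → ℝ) : ℝ :=
  (∑ x : Fin n → Bool, g x) / 2 ^ n

/-- The parity function `χ_S(x) = (-1)^{Σ_{i∈S} x_i}`. -/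
def parity (n : ℕ) (S : Finset (Fin n)) (x : Fin n → Bool) : ℝ :=
  (-1 : ℝ) ^ (S.filter (fun i => x i = true)).card

/-- Fourier coefficient `f̂(S) = E[f ⬝ χ_S]`. -/
def fourierHat (n : ℕ) (f : (Fin n → Bool) → ℝ) (S : Finset (Fin n)) : ℝ :=
  expect n (fun x => f x * parity n S x)

/-- Discrete derivative `∂ᵢ f(x) = (f(x_{i←1}) − f(x_{i←0}))/2`. -/
def dderiv (n : ℕ) (f : (Fin n → Bool) → ℝ) (i : Fin n) (x : Fin n → Bool) : ℝ :=
  (f (Function.update x i true) - f (Function.update x i false)) / 2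

/-- The `ℓ_κ^κ`-influence of variable `i`: `Inf^κ_i(f) = E[|∂ᵢ f|^κ]`. -/
def influence (n : ℕ) (κ : ℝ) (f : (Fin n → Bool) → ℝ) (i : Fin n) : ℝ :=
  expect n (fun x => |dderiv n f i x| ^ κ)



lemma notmem_map_succ (n : ℕ) (T : Finset (Fin n)) :
    (0 : Fin (n+1)) ∉ T.map (Fin.succEmb n) := by
  intro hT
  simp only [Finset.mem_map] at hT
  obtain ⟨j, _, hj⟩ := hT
  exact (Fin.succ_ne_zero j) hj

lemma finset_succ_sum (n : ℕ) (F : Finset (Fin (n + 1)) → ℝ) :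
    ∑ S : Finset (Fin (n + 1)), F S =
      ∑ T : Finset (Fin n),
        (F (T.map (Fin.succEmb n)) + F (insert 0 (T.map (Fin.succEmb n)))) := by
  set e : Finset (Fin n) × Bool → Finset (Fin (n+1)) := fun p =>
    if p.2 then insert 0 (p.1.map (Fin.succEmb n)) else p.1.map (Fin.succEmb n) with he
  have hbij : Function.Bijective e := by
    constructor
    · rintro ⟨T, b⟩ ⟨T', b'⟩ h
      have hmem : ∀ (T : Finset (Fin n)) (b : Bool),
          ((0 : Fin (n+1)) ∈ e (T, b)) ↔ b = true := by
        intro T b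
        cases b <;> simp [he, notmem_map_succ n T]
      have hb : b = b' := by
        rcases Bool.eq_false_or_eq_true b' with hb' | hb' <;>
          rcases Bool.eq_false_or_eq_true b with hb | hb <;> subst hb <;> subst hb' <;> try rfl
        · exact absurd ((hmem T' true).mpr rfl) (by rw [← h]; rw [hmem]; simp)
        · exact absurd ((hmem T true).mpr rfl) (by rw [h]; rw [hmem]; simp)
      subst hb
      have hTT : T.map (Fin.succEmb n) = T'.map (Fin.succEmb n) := by
        cases b <;> simp only [he, if_true, if_false, Bool.false_eq_true] at h
        · exact h
        · have := congrArg (fun s => Finset.erase s 0) h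
          simpa [Finset.erase_insert (notmem_map_succ n T),
            Finset.erase_insert (notmem_map_succ n T')] using this
      have := Finset.map_injective (Fin.succEmb n) hTT
      simp [this]
    · intro S
      by_cases h0 : (0 : Fin (n+1)) ∈ S
      · refine ⟨⟨Finset.univ.filter (fun j => j.succ ∈ S), true⟩, ?_⟩
        · simp only [he, if_true]
          have key : (Finset.univ.filter (fun j => j.succ ∈ S)).map (Fin.succEmb n)
              = S.erase 0 := by
            ext i
            simp only [Finset.mem_map, Finset.mem_filter, Finset.mem_univ, true_and,
              Finset.mem_erase]
            constructor
            · rintro ⟨j, hj, rfl⟩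
              exact ⟨Fin.succ_ne_zero j, hj⟩
            · rintro ⟨hi0, hiS⟩
              rcases Fin.eq_succ_of_ne_zero hi0 with ⟨j, rfl⟩
              exact ⟨j, hiS, rfl⟩
          rw [key]
          exact Finset.insert_erase h0
      · refine ⟨⟨Finset.univ.filter (fun j => j.succ ∈ S), false⟩, ?_⟩
        · simp only [he, Bool.false_eq_true, if_false]
          ext i
          simp only [Finset.mem_map, Finset.mem_filter, Finset.mem_univ, true_and]
          constructor
          · rintro ⟨j, hj, rfl⟩
            exact hj
          · intro hiS
            have hi0 : i ≠ 0 := fun hh => h0 (hh ▸ hiS)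
            rcases Fin.eq_succ_of_ne_zero hi0 with ⟨j, rfl⟩
            exact ⟨j, hiS, rfl⟩
  have := Fintype.sum_bijective e hbij (fun p => F (e p)) F (fun p => rfl)
  rw [← this, Fintype.sum_prod_type]
  refine Finset.sum_congr rfl fun T _ => ?_
  rw [Fintype.sum_bool]
  simp [he, add_comm]



-- x-side split
lemma pi_succ_sum (n : ℕ) (G : (Fin (n+1) → Bool) → ℝ) :
    ∑ x : Fin (n+1) → Bool, G x =
      ∑ y : Fin n → Bool, (G (Fin.cons true y) + G (Fin.cons false y)) := by
  rw [← (Fin.consEquiv (fun _ : Fin (n+1) => Bool)).sum_comp G]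
  rw [Fintype.sum_prod_type]
  rw [Finset.sum_comm]
  refine Finset.sum_congr rfl fun y _ => ?_
  rw [Fintype.sum_bool]
  rfl

lemma expect_succ (n : ℕ) (G : (Fin (n+1) → Bool) → ℝ) :
    expect (n+1) G =
      expect n (fun y => (G (Fin.cons true y) + G (Fin.cons false y)) / 2) := by
  unfold expect
  rw [pi_succ_sum, ← Finset.sum_div, pow_succ]
  ring

lemma parity_map (n : ℕ) (T : Finset (Fin n)) (b : Bool) (y : Fin n → Bool) :
    parity (n+1) (T.map (Fin.succEmb n)) (Fin.cons b y) = parity n T y := by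
  unfold parity
  congr 1
  have : (T.map (Fin.succEmb n)).filter (fun i => Fin.cons (α := fun _ => Bool) b y i = true)
      = (T.filter (fun j => y j = true)).map (Fin.succEmb n) := by
    ext i
    simp only [Finset.mem_filter, Finset.mem_map]
    constructor
    · rintro ⟨⟨j, hj, rfl⟩, h2⟩
      exact ⟨j, ⟨hj, by simpa [Fin.cons_succ] using h2⟩, rfl⟩
    · rintro ⟨j, ⟨hj, hy⟩, rfl⟩
      exact ⟨⟨j, hj, rfl⟩, by simpa [Fin.cons_succ] using hy⟩
  rw [this, Finset.card_map]

lemma notmem_map_succ' (n : ℕ) (T : Finset (Fin n)) :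
    (0 : Fin (n+1)) ∉ T.map (Fin.succEmb n) := by
  intro hT
  simp only [Finset.mem_map] at hT
  obtain ⟨j, _, hj⟩ := hT
  exact (Fin.succ_ne_zero j) hj

lemma parity_insert_zero (n : ℕ) (T : Finset (Fin n)) (b : Bool) (y : Fin n → Bool) :
    parity (n+1) (insert 0 (T.map (Fin.succEmb n))) (Fin.cons b y) =
      (if b then (-1:ℝ) else 1) * parity n T y := by
  rw [← parity_map n T b y]
  unfold parity
  rw [Finset.filter_insert]
  cases b
  · simp
  · rw [if_pos (by simp)]
    rw [Finset.card_insert_of_notMem (by simp [notmem_map_succ' n T]), pow_succ, if_pos rfl]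
    ring


def gEven (n : ℕ) (g : (Fin (n+1) → Bool) → ℝ) : (Fin n → Bool) → ℝ :=
  fun y => (g (Fin.cons true y) + g (Fin.cons false y)) / 2
def gOdd (n : ℕ) (g : (Fin (n+1) → Bool) → ℝ) : (Fin n → Bool) → ℝ :=
  fun y => (g (Fin.cons false y) - g (Fin.cons true y)) / 2

lemma fourierHat_map (n : ℕ) (g : (Fin (n+1) → Bool) → ℝ) (T : Finset (Fin n)) :
    fourierHat (n+1) g (T.map (Fin.succEmb n)) = fourierHat n (gEven n g) T := by
  unfold fourierHat
  rw [expect_succ]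
  congr 1
  funext y
  rw [parity_map, parity_map]
  unfold gEven
  ring

lemma fourierHat_insert (n : ℕ) (g : (Fin (n+1) → Bool) → ℝ) (T : Finset (Fin n)) :
    fourierHat (n+1) g (insert 0 (T.map (Fin.succEmb n))) = fourierHat n (gOdd n g) T := by
  unfold fourierHat
  rw [expect_succ]
  congr 1
  funext y
  rw [parity_insert_zero, parity_insert_zero]
  unfold gOdd
  norm_num
  ring



lemma holder_step {X : Type*} [Fintype X] (C D : X → ℝ) (hC : ∀ x, 0 ≤ C x)
    (hD : ∀ x, 0 ≤ D x) (hCD : ∀ x, C x ≤ D x) {p : ℝ} (hp0 : 0 < p) (hp1 : p < 1) :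
    (∑ x, C x ^ p) ≤ (∑ x, C x * D x ^ (p - 1)) ^ p * (∑ x, D x ^ p) ^ (1 - p) := by
  have h1p : (0:ℝ) < 1 - p := by linarith
  have hconj : (1/p).HolderConjugate (1/(1-p)) := by
    rw [Real.holderConjugate_iff]
    constructor
    · exact one_lt_one_div hp0 hp1
    · rw [one_div, one_div, inv_inv, inv_inv]; ring
  have key := Real.inner_le_Lp_mul_Lq Finset.univ
    (fun x => (C x * D x ^ (p - 1)) ^ p) (fun x => (D x ^ p) ^ (1 - p)) hconj
  have hfg : ∀ x : X, (C x * D x ^ (p - 1)) ^ p * (D x ^ p) ^ (1 - p) = C x ^ p := by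
    intro x
    rcases eq_or_lt_of_le (hD x) with h0 | h0
    · have hCx : C x = 0 := le_antisymm (le_trans (hCD x) (le_of_eq h0.symm)) (hC x)
      rw [hCx, ← h0]
      simp [Real.zero_rpow hp0.ne', Real.zero_rpow h1p.ne',
        Real.zero_rpow (show p - 1 ≠ 0 by linarith)]
    · rw [Real.mul_rpow (hC x) (Real.rpow_nonneg (hD x) _),
        ← Real.rpow_mul (hD x), ← Real.rpow_mul (hD x), mul_assoc,
        ← Real.rpow_add h0]
      have : (p - 1) * p + p * (1 - p) = 0 := by ring
      rw [this, Real.rpow_zero, mul_one]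
  have hf_abs : ∀ x : X, |(C x * D x ^ (p - 1)) ^ p| ^ (1/p) = C x * D x ^ (p - 1) := by
    intro x
    have hnn : 0 ≤ C x * D x ^ (p - 1) := mul_nonneg (hC x) (Real.rpow_nonneg (hD x) _)
    rw [abs_of_nonneg (Real.rpow_nonneg hnn _), ← Real.rpow_mul hnn,
      mul_one_div, div_self hp0.ne', Real.rpow_one]
  have hg_abs : ∀ x : X, |(D x ^ p) ^ (1 - p)| ^ (1/(1-p)) = D x ^ p := by
    intro x
    have hnn : (0:ℝ) ≤ D x ^ p := Real.rpow_nonneg (hD x) _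
    rw [abs_of_nonneg (Real.rpow_nonneg hnn _), ← Real.rpow_mul hnn,
      mul_one_div, div_self h1p.ne', Real.rpow_one]
  simp only [hfg, hf_abs, hg_abs, one_div_one_div] at key
  exact key

lemma rev_minkowski {X : Type*} [Fintype X] (A B : X → ℝ) (hA : ∀ x, 0 ≤ A x)
    (hB : ∀ x, 0 ≤ B x) {p : ℝ} (hp0 : 0 < p) (hp1 : p < 1) :
    (∑ x, A x ^ p) ^ (1/p) + (∑ x, B x ^ p) ^ (1/p) ≤
      (∑ x, (A x + B x) ^ p) ^ (1/p) := by
  have hABnn : ∀ x : X, (0:ℝ) ≤ A x + B x := fun x => add_nonneg (hA x) (hB x)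
  set S : ℝ := ∑ x, (A x + B x) ^ p with hS
  have hS0 : 0 ≤ S := Finset.sum_nonneg fun x _ => Real.rpow_nonneg (hABnn x) _
  rcases eq_or_lt_of_le hS0 with hSz | hSpos
  · -- S = 0 : all terms zero
    have hz : ∀ x : X, (A x + B x) ^ p = 0 := by
      intro x
      have := (Finset.sum_eq_zero_iff_of_nonneg
        (fun x _ => Real.rpow_nonneg (hABnn x) p)).mp hSz.symm
      exact this x (Finset.mem_univ x)
    have hzA : ∀ x : X, A x = 0 := by
      intro x
      have h0 : A x + B x = 0 := by
        have := hz x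
        rcases Real.rpow_eq_zero_iff_of_nonneg (hABnn x) |>.mp this with ⟨h, _⟩
        exact h
      linarith [hA x, hB x]
    have hzB : ∀ x : X, B x = 0 := by
      intro x
      have h0 : A x + B x = 0 := by
        rcases Real.rpow_eq_zero_iff_of_nonneg (hABnn x) |>.mp (hz x) with ⟨h, _⟩
        exact h
      linarith [hA x, hB x]
    simp only [hzA, hzB, Real.zero_rpow hp0.ne', Finset.sum_const, smul_zero, ← hS, ← hSz]
    rw [Real.zero_rpow (by positivity : (1:ℝ)/p ≠ 0)]
    norm_num
  · -- main case
    have hstepA := holder_step A (fun x => A x + B x) hA hABnn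
      (fun x => le_add_of_nonneg_right (hB x)) hp0 hp1
    have hstepB := holder_step B (fun x => A x + B x) hB hABnn
      (fun x => le_add_of_nonneg_left (hA x)) hp0 hp1
    have hXnnA : (0:ℝ) ≤ ∑ x, A x * (A x + B x) ^ (p - 1) :=
      Finset.sum_nonneg fun x _ => mul_nonneg (hA x) (Real.rpow_nonneg (hABnn x) _)
    have hXnnB : (0:ℝ) ≤ ∑ x, B x * (A x + B x) ^ (p - 1) :=
      Finset.sum_nonneg fun x _ => mul_nonneg (hB x) (Real.rpow_nonneg (hABnn x) _)
    have hup : ∀ (C : X → ℝ), (∀ x, 0 ≤ C x) →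
        (∑ x, C x ^ p) ≤ (∑ x, C x * (A x + B x) ^ (p - 1)) ^ p * S ^ (1 - p) →
        (0:ℝ) ≤ ∑ x, C x * (A x + B x) ^ (p - 1) →
        (∑ x, C x ^ p) ^ (1/p) ≤ (∑ x, C x * (A x + B x) ^ (p - 1)) * S ^ ((1 - p)/p) := by
      intro C hCnn hstep hXnn
      have h1 : (∑ x, C x ^ p) ^ (1/p) ≤
          ((∑ x, C x * (A x + B x) ^ (p - 1)) ^ p * S ^ (1 - p)) ^ (1/p) :=
        Real.rpow_le_rpow (Finset.sum_nonneg fun x _ => Real.rpow_nonneg (hCnn x) _)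
          hstep (by positivity)
      calc (∑ x, C x ^ p) ^ (1/p) ≤ _ := h1
        _ = (∑ x, C x * (A x + B x) ^ (p - 1)) * S ^ ((1 - p)/p) := by
          rw [Real.mul_rpow (Real.rpow_nonneg hXnn _) (Real.rpow_nonneg hS0 _),
            ← Real.rpow_mul hXnn, ← Real.rpow_mul hS0, mul_one_div, div_self hp0.ne',
            Real.rpow_one, mul_one_div]
    have hA' := hup A hA hstepA hXnnA
    have hB' := hup B hB hstepB hXnnB
    have hsum : (∑ x, A x * (A x + B x) ^ (p - 1)) + (∑ x, B x * (A x + B x) ^ (p - 1))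
        = S := by
      rw [← Finset.sum_add_distrib]
      refine Finset.sum_congr rfl fun x _ => ?_
      rcases eq_or_lt_of_le (hABnn x) with h0 | h0
      · rw [← h0, Real.zero_rpow hp0.ne']
        have hAx : A x = 0 := by linarith [hA x, hB x]
        have hBx : B x = 0 := by linarith [hA x, hB x]
        rw [hAx, hBx]; ring
      · rw [← add_mul]
        nth_rewrite 1 [← Real.rpow_one (A x + B x)]
        rw [← Real.rpow_add h0]
        norm_num
    calc (∑ x, A x ^ p) ^ (1/p) + (∑ x, B x ^ p) ^ (1/p)
        ≤ ((∑ x, A x * (A x + B x) ^ (p - 1)) + (∑ x, B x * (A x + B x) ^ (p - 1)))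
            * S ^ ((1 - p)/p) := by rw [add_mul]; exact add_le_add hA' hB'
      _ = S * S ^ ((1 - p)/p) := by rw [hsum]
      _ = S ^ (1/p) := by
          nth_rewrite 1 [← Real.rpow_one S]
          rw [← Real.rpow_add hSpos]
          congr 1
          field_simp
          ring



-- AM-GM style: u^γ + v^γ ≥ 2 (uv)^(γ/2) ≥ 2 for 0<u, 0<v, uv ≤ 1, γ < 0
lemma rpow_add_rpow_ge_two {u v γ : ℝ} (hu : 0 < u) (hv : 0 < v) (huv : u * v ≤ 1)
    (hγ : γ < 0) : 2 ≤ u ^ γ + v ^ γ := by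
  have h1 : Real.sqrt (u ^ γ) * Real.sqrt (v ^ γ) = (u * v) ^ (γ / 2) := by
    rw [← Real.sqrt_mul (Real.rpow_nonneg hu.le _), ← Real.mul_rpow hu.le hv.le,
      Real.sqrt_eq_rpow, ← Real.rpow_mul (mul_nonneg hu.le hv.le)]
    ring_nf
  have h2 : 2 * (Real.sqrt (u ^ γ) * Real.sqrt (v ^ γ)) ≤ u ^ γ + v ^ γ := by
    have hs := sq_nonneg (Real.sqrt (u ^ γ) - Real.sqrt (v ^ γ))
    rw [sub_sq] at hs
    rw [Real.sq_sqrt (Real.rpow_nonneg hu.le _), Real.sq_sqrt (Real.rpow_nonneg hv.le _)] at hs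
    linarith
  have h3 : (1:ℝ) ≤ (u * v) ^ (γ / 2) :=
    Real.one_le_rpow_of_pos_of_le_one_of_nonpos (by positivity) huv (by linarith)
  calc (2:ℝ) = 2 * 1 := by ring
    _ ≤ 2 * ((u * v) ^ (γ / 2)) := by linarith
    _ = 2 * (Real.sqrt (u ^ γ) * Real.sqrt (v ^ γ)) := by rw [h1]
    _ ≤ u ^ γ + v ^ γ := h2

lemma contG {β : ℝ} (hβ : 0 < β) : Continuous (fun t : ℝ => (1 + t) ^ β) := by
  rw [continuous_iff_continuousAt]
  intro x
  exact (Real.continuousAt_rpow_const _ _ (Or.inr hβ.le)).comp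
    (continuousAt_const.add continuousAt_id)

lemma contG' {β : ℝ} (hβ : 0 < β) : Continuous (fun t : ℝ => (1 - t) ^ β) := by
  rw [continuous_iff_continuousAt]
  intro x
  exact (Real.continuousAt_rpow_const _ _ (Or.inr hβ.le)).comp
    (continuousAt_const.sub continuousAt_id)

lemma hasDerivAt_one_add {β x : ℝ} (hx : (1:ℝ) + x ≠ 0) :
    HasDerivAt (fun t : ℝ => (1 + t) ^ β) (β * (1 + x) ^ (β - 1)) x := by
  have h1 : HasDerivAt (fun t : ℝ => 1 + t) 1 x := (hasDerivAt_id x).const_add 1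
  have h2 := (Real.hasDerivAt_rpow_const (p := β) (Or.inl hx)).comp x h1
  simpa [Function.comp_def] using h2

lemma hasDerivAt_one_sub {β x : ℝ} (hx : (1:ℝ) - x ≠ 0) :
    HasDerivAt (fun t : ℝ => (1 - t) ^ β) (-(β * (1 - x) ^ (β - 1))) x := by
  have h1 : HasDerivAt (fun t : ℝ => 1 - t) (-1) x := by
    exact (hasDerivAt_id x).const_sub 1
  have h2 := (Real.hasDerivAt_rpow_const (p := β) (Or.inl hx)).comp x h1
  simpa [mul_comm, Function.comp_def] using h2

-- Step A
lemma stepA {β : ℝ} (hβ0 : 0 < β) (hβ1 : β < 1) :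
    ∀ t ∈ Set.Ico (0:ℝ) 1, 0 ≤ (1 + t) ^ β - (1 - t) ^ β - 2 * β * t := by
  set G : ℝ → ℝ := fun t => (1 + t) ^ β - (1 - t) ^ β - 2 * β * t with hG
  have hderiv : ∀ x ∈ Set.Ioo (0:ℝ) 1, HasDerivAt G
      (β * (1 + x) ^ (β - 1) + β * (1 - x) ^ (β - 1) - 2 * β) x := by
    intro x hx
    have h1x : (0:ℝ) < 1 + x := by linarith [hx.1]
    have h2x : (0:ℝ) < 1 - x := by linarith [hx.2]
    have hd1 := hasDerivAt_one_add (β := β) h1x.ne'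
    have hd2 := hasDerivAt_one_sub (β := β) h2x.ne'
    have hd3 : HasDerivAt (fun t : ℝ => 2 * β * t) (2 * β) x := by
      simpa using (hasDerivAt_id x).const_mul (2 * β)
    have := (hd1.sub hd2).sub hd3
    exact this.congr_deriv (by ring)
  have hmono : MonotoneOn G (Set.Ico 0 1) := by
    apply monotoneOn_of_deriv_nonneg (convex_Ico 0 1)
    · exact ((contG hβ0).sub (contG' hβ0)).sub (continuous_const.mul continuous_id)
        |>.continuousOn
    · intro x hx
      rw [interior_Ico] at hx
      exact (hderiv x hx).differentiableAt.differentiableWithinAt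
    · intro x hx
      rw [interior_Ico] at hx
      rw [(hderiv x hx).deriv]
      have h1x : (0:ℝ) < 1 + x := by linarith [hx.1]
      have h2x : (0:ℝ) < 1 - x := by linarith [hx.2]
      have huv : (1 + x) * (1 - x) ≤ 1 := by nlinarith [sq_nonneg x]
      have := rpow_add_rpow_ge_two h1x h2x huv (by linarith : β - 1 < 0)
      nlinarith
  intro t ht
  have h0 : G 0 = 0 := by simp [hG]
  have := hmono (Set.mem_Ico.mpr ⟨le_refl 0, by norm_num⟩) ht ht.1
  rw [h0] at this
  exact this

-- Step B : core inequality
lemma coreIneq {κ : ℝ} (hκ1 : 1 < κ) (hκ2 : κ < 2) :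
    ∀ t ∈ Set.Icc (0:ℝ) 1, 2 + κ * (κ - 1) * t ^ 2 ≤ (1 + t) ^ κ + (1 - t) ^ κ := by
  set F : ℝ → ℝ := fun t => (1 + t) ^ κ + (1 - t) ^ κ - 2 - κ * (κ - 1) * t ^ 2 with hF
  have hκ0 : (0:ℝ) < κ := by linarith
  have hderiv : ∀ x ∈ Set.Ioo (0:ℝ) 1, HasDerivAt F
      (κ * (1 + x) ^ (κ - 1) - κ * (1 - x) ^ (κ - 1) - κ * (κ - 1) * (2 * x)) x := by
    intro x hx
    have h1x : (0:ℝ) < 1 + x := by linarith [hx.1]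
    have h2x : (0:ℝ) < 1 - x := by linarith [hx.2]
    have hd1 := hasDerivAt_one_add (β := κ) h1x.ne'
    have hd2 := hasDerivAt_one_sub (β := κ) h2x.ne'
    have hd3 : HasDerivAt (fun t : ℝ => t ^ 2) (2 * x) x := by
      simpa using hasDerivAt_pow 2 x
    have hd4 := hd3.const_mul (κ * (κ - 1))
    have := ((hd1.add hd2).sub (hasDerivAt_const x 2)).sub hd4
    exact this.congr_deriv (by ring)
  have hmono : MonotoneOn F (Set.Icc 0 1) := by
    apply monotoneOn_of_deriv_nonneg (convex_Icc 0 1)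
    · exact ((((contG hκ0).add (contG' hκ0)).sub continuous_const).sub
        (continuous_const.mul (continuous_pow 2))).continuousOn
    · intro x hx
      rw [interior_Icc] at hx
      exact (hderiv x hx).differentiableAt.differentiableWithinAt
    · intro x hx
      rw [interior_Icc] at hx
      rw [(hderiv x hx).deriv]
      have hx' : x ∈ Set.Ico (0:ℝ) 1 := ⟨hx.1.le, hx.2⟩
      have hA := stepA (β := κ - 1) (by linarith) (by linarith) x hx'
      nlinarith
  intro t ht
  have h0 : F 0 = 0 := by
    simp only [hF]
    norm_num
  have := hmono (Set.mem_Icc.mpr ⟨le_refl 0, by norm_num⟩) ht ht.1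
  rw [h0] at this
  simp only [hF] at this
  linarith



lemma core_norm {κ : ℝ} (hκ1 : 1 < κ) (hκ2 : κ < 2) {t : ℝ} (ht0 : 0 ≤ t) (ht1 : t ≤ 1) :
    (1 + (κ - 1) * t ^ 2) ^ (κ / 2) ≤ ((1 + t) ^ κ + (1 - t) ^ κ) / 2 := by
  have h1 : (1 + (κ - 1) * t ^ 2) ^ (κ / 2) ≤ 1 + (κ / 2) * ((κ - 1) * t ^ 2) :=
    rpow_one_add_le_one_add_mul_self (by nlinarith) (by linarith) (by linarith)
  have h2 := coreIneq hκ1 hκ2 t ⟨ht0, ht1⟩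
  linarith

-- two point inequality, normalized to nonneg ordered pair
lemma two_point_ord {κ : ℝ} (hκ1 : 1 < κ) (hκ2 : κ < 2) {a b : ℝ} (hb : 0 ≤ b)
    (hba : b ≤ a) :
    ((a ^ 2 + (κ - 1) * b ^ 2 : ℝ)) ^ (κ / 2) ≤ ((a + b) ^ κ + (a - b) ^ κ) / 2 := by
  rcases eq_or_lt_of_le (le_trans hb hba) with ha0 | ha0
  · -- a = 0, hence b = 0
    have hb0 : b = 0 := le_antisymm (ha0 ▸ hba) hb
    rw [← ha0, hb0]
    rw [show (0:ℝ)^2 + (κ-1) * (0:ℝ)^2 = 0 by ring, Real.zero_rpow (by positivity : κ/2 ≠ 0)]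
    positivity
  · set t := b / a with htdef
    have ht0 : 0 ≤ t := div_nonneg hb ha0.le
    have ht1 : t ≤ 1 := (div_le_one ha0).mpr hba
    have hb_eq : b = a * t := by rw [htdef, mul_comm, div_mul_cancel₀ b ha0.ne']
    have key := core_norm hκ1 hκ2 ht0 ht1
    have ha2 : (a ^ 2 + (κ - 1) * b ^ 2) = a ^ 2 * (1 + (κ - 1) * t ^ 2) := by
      rw [hb_eq]; ring
    have haK : ∀ u : ℝ, 0 ≤ u → (a * u) ^ κ = a ^ κ * u ^ κ := fun u hu =>
      Real.mul_rpow ha0.le hu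
    have hL : (a ^ 2 + (κ - 1) * b ^ 2) ^ (κ / 2)
        = a ^ κ * (1 + (κ - 1) * t ^ 2) ^ (κ / 2) := by
      rw [ha2, Real.mul_rpow (by positivity) (by nlinarith [sq_nonneg t])]
      congr 1
      rw [← Real.rpow_natCast a 2, ← Real.rpow_mul ha0.le,
        show ((2:ℕ):ℝ) * (κ/2) = κ by push_cast; ring]
    have hR1 : (a + b) ^ κ = a ^ κ * (1 + t) ^ κ := by
      rw [hb_eq, show a + a * t = a * (1 + t) by ring, haK _ (by linarith)]
    have hR2 : (a - b) ^ κ = a ^ κ * (1 - t) ^ κ := by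
      rw [hb_eq, show a - a * t = a * (1 - t) by ring, haK _ (by linarith)]
    rw [hL, hR1, hR2]
    have haκ : (0:ℝ) ≤ a ^ κ := Real.rpow_nonneg ha0.le _
    calc a ^ κ * (1 + (κ - 1) * t ^ 2) ^ (κ / 2)
        ≤ a ^ κ * (((1 + t) ^ κ + (1 - t) ^ κ) / 2) := by
          exact mul_le_mul_of_nonneg_left key haκ
      _ = (a ^ κ * (1 + t) ^ κ + a ^ κ * (1 - t) ^ κ) / 2 := by ring

-- abs pair identity
lemma sq_eq_nonneg {x y : ℝ} (hx : 0 ≤ x) (hy : 0 ≤ y) (h : x ^ 2 = y ^ 2) : x = y := by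
  rw [← Real.sqrt_sq hx, h, Real.sqrt_sq hy]

lemma abs_pair {a b : ℝ} (hab : 0 ≤ a * b) :
    |a + b| = |a| + |b| ∧ |a - b| = abs (|a| - |b|) := by
  have hm : |a| * |b| = a * b := by rw [← abs_mul, abs_of_nonneg hab]
  constructor
  · refine (sq_eq_nonneg (abs_nonneg _) (by positivity) ?_)
    rw [sq_abs, add_sq, add_sq, sq_abs, sq_abs]
    linear_combination (-2) * hm
  · refine (sq_eq_nonneg (abs_nonneg _) (abs_nonneg _) ?_)
    rw [sq_abs, sq_abs, sub_sq, sub_sq, sq_abs, sq_abs]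
    linear_combination 2 * hm

-- full two point
lemma two_point {κ : ℝ} (hκ1 : 1 < κ) (hκ2 : κ < 2) (a b : ℝ) :
    ((a ^ 2 + (κ - 1) * b ^ 2 : ℝ)) ^ (κ / 2) ≤ (|a + b| ^ κ + |a - b| ^ κ) / 2 := by
  have habs : |a + b| ^ κ + |a - b| ^ κ = (|a| + |b|) ^ κ + abs (|a| - |b|) ^ κ := by
    rcases le_or_gt 0 (a * b) with hab | hab
    · obtain ⟨e1, e2⟩ := abs_pair hab
      rw [e1, e2]
    · obtain ⟨e1, e2⟩ := abs_pair (a := a) (b := -b) (by nlinarith)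
      rw [show a + b = a - (-b) by ring, show a - b = a + (-b) by ring, e1, e2, abs_neg]
      rw [add_comm]
  rw [habs]
  rcases le_total |b| |a| with hba | hba
  · have key := two_point_ord hκ1 hκ2 (abs_nonneg b) hba
    rw [sq_abs, sq_abs] at key
    rwa [abs_of_nonneg (by linarith : (0:ℝ) ≤ |a| - |b|)]
  · have key := two_point_ord hκ1 hκ2 (abs_nonneg a) hba
    rw [sq_abs, sq_abs] at key
    have h1 : a ^ 2 + (κ - 1) * b ^ 2 ≤ b ^ 2 + (κ - 1) * a ^ 2 := by
      have : a ^ 2 ≤ b ^ 2 := by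
        rw [← sq_abs a, ← sq_abs b]
        exact pow_le_pow_left₀ (abs_nonneg a) hba 2
      nlinarith
    have h2 : (a ^ 2 + (κ - 1) * b ^ 2) ^ (κ / 2) ≤ (b ^ 2 + (κ - 1) * a ^ 2) ^ (κ / 2) :=
      Real.rpow_le_rpow (by nlinarith [sq_nonneg a, sq_nonneg b]) h1 (by positivity)
    calc (a ^ 2 + (κ - 1) * b ^ 2) ^ (κ / 2) ≤ (b ^ 2 + (κ - 1) * a ^ 2) ^ (κ / 2) := h2
      _ ≤ ((|b| + |a|) ^ κ + (|b| - |a|) ^ κ) / 2 := key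
      _ = ((|a| + |b|) ^ κ + abs (|a| - |b|) ^ κ) / 2 := by
          rw [add_comm |b| |a|, abs_sub_comm, abs_of_nonneg (by linarith : (0:ℝ) ≤ |b| - |a|)]


lemma expect_nonneg (n : ℕ) (g : (Fin n → Bool) → ℝ) (hg : ∀ x, 0 ≤ g x) :
    0 ≤ expect n g :=
  div_nonneg (Finset.sum_nonneg fun x _ => hg x) (by positivity)

lemma expect_mono (n : ℕ) (g h : (Fin n → Bool) → ℝ) (hgh : ∀ x, g x ≤ h x) :
    expect n g ≤ expect n h := by
  unfold expect
  gcongr with x hx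
  exact hgh x

lemma expect_const_mul (n : ℕ) (c : ℝ) (g : (Fin n → Bool) → ℝ) :
    expect n (fun x => c * g x) = c * expect n g := by
  unfold expect
  rw [← Finset.mul_sum, mul_div_assoc]

-- expect version of reverse Minkowski
lemma rev_minkowski_expect (n : ℕ) (A B : (Fin n → Bool) → ℝ) (hA : ∀ x, 0 ≤ A x)
    (hB : ∀ x, 0 ≤ B x) {p : ℝ} (hp0 : 0 < p) (hp1 : p < 1) :
    (expect n (fun x => A x ^ p)) ^ (1/p) + (expect n (fun x => B x ^ p)) ^ (1/p) ≤
      (expect n (fun x => (A x + B x) ^ p)) ^ (1/p) := by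
  have hbase := rev_minkowski A B hA hB hp0 hp1
  have hc : (0:ℝ) < ((2:ℝ) ^ n)⁻¹ := by positivity
  have hexp : ∀ (C : (Fin n → Bool) → ℝ), (∀ x, 0 ≤ C x) →
      (expect n (fun x => C x ^ p)) ^ (1/p) =
        (((2:ℝ) ^ n)⁻¹) ^ (1/p) * (∑ x, C x ^ p) ^ (1/p) := by
    intro C hC
    unfold expect
    rw [div_eq_inv_mul, Real.mul_rpow hc.le
      (Finset.sum_nonneg fun x _ => Real.rpow_nonneg (hC x) _)]
  rw [hexp A hA, hexp B hB, hexp (fun x => A x + B x) (fun x => add_nonneg (hA x) (hB x)),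
    ← mul_add]
  exact mul_le_mul_of_nonneg_left hbase (Real.rpow_nonneg hc.le _)

lemma hc_ineq {κ : ℝ} (hκ1 : 1 < κ) (hκ2 : κ < 2) :
    ∀ (n : ℕ) (g : (Fin n → Bool) → ℝ),
      ∑ S : Finset (Fin n), (κ - 1) ^ S.card * (fourierHat n g S) ^ 2 ≤
        (expect n (fun x => |g x| ^ κ)) ^ (2/κ) := by
  have hκ0 : (0:ℝ) < κ := by linarith
  have hκ1' : (0:ℝ) < κ - 1 := by linarith
  intro n
  induction n with
  | zero =>
    intro g
    have hx : ∀ x : Fin 0 → Bool, x = (fun i => i.elim0) := by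
      intro x; funext i; exact i.elim0
    have hsum : ∀ (h : (Fin 0 → Bool) → ℝ), expect 0 h = h (fun i => i.elim0) := by
      intro h
      unfold expect
      rw [Finset.sum_eq_single_of_mem (fun i => i.elim0) (Finset.mem_univ _)]
      · norm_num
      · intro x _ hne; exact absurd (hx x) hne
    have hFset : ∀ S : Finset (Fin 0), S = ∅ := fun S =>
      Finset.eq_empty_of_forall_notMem (fun i _ => i.elim0)
    rw [Finset.sum_eq_single_of_mem ∅ (Finset.mem_univ _)
      (fun S _ hne => absurd (hFset S) hne)]
    have hpar : parity 0 ∅ (fun i => i.elim0) = 1 := by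
      unfold parity
      simp
    rw [hsum]
    unfold fourierHat
    rw [hsum, hpar, mul_one]
    have e1 : (|g fun i => i.elim0| ^ κ) ^ (2/κ) = |g fun i => i.elim0| ^ (2:ℕ) := by
      rw [← Real.rpow_natCast (|g fun i => i.elim0|) 2, ← Real.rpow_mul (abs_nonneg _)]
      congr 1
      push_cast
      field_simp
    rw [e1, sq_abs, Finset.card_empty, pow_zero, one_mul]
  | succ n ih =>
    intro g
    set e := gEven n g with he
    set o := gOdd n g with ho
    have hsplit : ∑ S : Finset (Fin (n+1)), (κ-1)^S.card * (fourierHat (n+1) g S)^2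
        = (∑ T : Finset (Fin n), (κ-1)^T.card * (fourierHat n e T)^2)
          + (κ-1) * ∑ T : Finset (Fin n), (κ-1)^T.card * (fourierHat n o T)^2 := by
      rw [finset_succ_sum n (fun S => (κ-1)^S.card * (fourierHat (n+1) g S)^2)]
      rw [Finset.sum_add_distrib, Finset.mul_sum]
      congr 1
      · exact Finset.sum_congr rfl fun T _ => by rw [Finset.card_map, fourierHat_map]
      · refine Finset.sum_congr rfl fun T _ => ?_
        rw [fourierHat_insert, Finset.card_insert_of_notMem (notmem_map_succ n T),
          Finset.card_map, pow_succ]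
        ring
    rw [hsplit]
    set p := κ/2 with hp
    have hp0 : 0 < p := by rw [hp]; positivity
    have hp1 : p < 1 := by rw [hp]; linarith
    have h1p : 1/p = 2/κ := by rw [hp, one_div_div]
    set A : (Fin n → Bool) → ℝ := fun x => e x ^ 2 with hA
    set B : (Fin n → Bool) → ℝ := fun x => (κ-1) * o x ^ 2 with hB
    have hAnn : ∀ x, 0 ≤ A x := fun x => sq_nonneg _
    have hBnn : ∀ x, 0 ≤ B x := fun x => mul_nonneg hκ1'.le (sq_nonneg _)
    have fsq : ∀ y : ℝ, (y ^ 2 : ℝ) ^ p = |y| ^ κ := by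
      intro y
      rw [← sq_abs, ← Real.rpow_natCast (|y|) 2, ← Real.rpow_mul (abs_nonneg _)]
      congr 1
      rw [hp]
      push_cast
      field_simp
    have fa : ∀ x, A x ^ p = |e x| ^ κ := fun x => fsq (e x)
    have fb : ∀ x, B x ^ p = (κ-1) ^ p * |o x| ^ κ := by
      intro x
      show ((κ-1) * o x ^ 2 : ℝ) ^ p = (κ-1) ^ p * |o x| ^ κ
      rw [Real.mul_rpow hκ1'.le (sq_nonneg _), fsq]
    have fc : ∀ x, (A x + B x) ^ p ≤
        (|g (Fin.cons true x)| ^ κ + |g (Fin.cons false x)| ^ κ) / 2 := by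
      intro x
      have h2 := two_point hκ1 hκ2 (e x) (o x)
      have he1 : e x + o x = g (Fin.cons false x) := by
        rw [he, ho]; unfold gEven gOdd; ring
      have he2 : e x - o x = g (Fin.cons true x) := by
        rw [he, ho]; unfold gEven gOdd; ring
      rw [he1, he2] at h2
      calc (A x + B x) ^ p = (e x ^ 2 + (κ-1) * o x ^ 2) ^ (κ/2) := rfl
        _ ≤ (|g (Fin.cons false x)| ^ κ + |g (Fin.cons true x)| ^ κ) / 2 := h2
        _ = (|g (Fin.cons true x)| ^ κ + |g (Fin.cons false x)| ^ κ) / 2 := by ring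
    have step1 := rev_minkowski_expect n A B hAnn hBnn hp0 hp1
    have hEe : expect n (fun x => A x ^ p) = expect n (fun x => |e x| ^ κ) := by
      congr 1; funext x; exact fa x
    have hEonn : 0 ≤ expect n (fun x => |o x| ^ κ) :=
      expect_nonneg n _ fun x => Real.rpow_nonneg (abs_nonneg _) _
    have hEo : (expect n (fun x => B x ^ p)) ^ (1/p)
        = (κ-1) * (expect n (fun x => |o x| ^ κ)) ^ (2/κ) := by
      have : (fun x => B x ^ p) = fun x => (κ-1) ^ p * |o x| ^ κ := by
        funext x; exact fb x
      rw [this, expect_const_mul n ((κ-1)^p) (fun x => |o x| ^ κ),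
        Real.mul_rpow (Real.rpow_nonneg hκ1'.le _) hEonn,
        ← Real.rpow_mul hκ1'.le, mul_one_div, div_self hp0.ne', Real.rpow_one, h1p]
    have step4 : (expect n (fun x => (A x + B x) ^ p)) ^ (1/p)
        ≤ (expect (n+1) (fun x => |g x| ^ κ)) ^ (2/κ) := by
      rw [h1p]
      apply Real.rpow_le_rpow
      · exact expect_nonneg n _ fun x => Real.rpow_nonneg (add_nonneg (hAnn x) (hBnn x)) _
      · rw [expect_succ n (fun x => |g x| ^ κ)]
        exact expect_mono n _ _ fc
      · positivity
    have hIH_e := ih e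
    have hIH_o := ih o
    have hEenn : 0 ≤ expect n (fun x => |e x| ^ κ) :=
      expect_nonneg n _ fun x => Real.rpow_nonneg (abs_nonneg _) _
    calc (∑ T : Finset (Fin n), (κ-1)^T.card * (fourierHat n e T)^2)
          + (κ-1) * ∑ T : Finset (Fin n), (κ-1)^T.card * (fourierHat n o T)^2
        ≤ (expect n (fun x => |e x| ^ κ)) ^ (2/κ)
          + (κ-1) * (expect n (fun x => |o x| ^ κ)) ^ (2/κ) := by
          refine add_le_add hIH_e ?_
          exact mul_le_mul_of_nonneg_left hIH_o hκ1'.le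
      _ = (expect n (fun x => A x ^ p)) ^ (1/p) + (expect n (fun x => B x ^ p)) ^ (1/p) := by
          rw [hEe, hEo, h1p]
      _ ≤ (expect n (fun x => (A x + B x) ^ p)) ^ (1/p) := step1
      _ ≤ (expect (n+1) (fun x => |g x| ^ κ)) ^ (2/κ) := step4


-- (i) pairing sum
lemma pairing_sum (n : ℕ) (i : Fin n) (H : (Fin n → Bool) → ℝ) :
    ∑ x : Fin n → Bool, (H (Function.update x i true) + H (Function.update x i false)) =
      2 * ∑ x : Fin n → Bool, H x := by
  have hinv : Function.Involutive (fun x : Fin n → Bool => Function.update x i (!x i)) := by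
    intro x
    funext j
    by_cases hj : j = i
    · subst hj
      simp [Function.update_self]
    · simp [Function.update_of_ne hj]
  set σ := hinv.toPerm with hσ
  have h1 : ∀ x : Fin n → Bool,
      H (Function.update x i true) + H (Function.update x i false) = H x + H (σ x) := by
    intro x
    have hσx : σ x = Function.update x i (!x i) := rfl
    cases hxi : x i
    · rw [hσx, hxi]
      have : Function.update x i false = x := by
        rw [← hxi]; exact Function.update_eq_self i x
      rw [this]
      simp [add_comm]
    · rw [hσx, hxi]
      have : Function.update x i true = x := by
        rw [← hxi]; exact Function.update_eq_self i x
      rw [this]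
      simp
  rw [Finset.sum_congr rfl (fun x _ => h1 x), Finset.sum_add_distrib, Equiv.sum_comp σ H]
  ring

-- (ii) parity invariant under update off-support
lemma parity_update (n : ℕ) (T : Finset (Fin n)) (i : Fin n) (hi : i ∉ T)
    (x : Fin n → Bool) (b : Bool) :
    parity n T (Function.update x i b) = parity n T x := by
  unfold parity
  congr 2
  refine Finset.filter_congr fun j hj => ?_
  have hji : j ≠ i := fun h => hi (h ▸ hj)
  rw [Function.update_of_ne hji]

-- (iii) parity of insert
lemma parity_insert (n : ℕ) (T : Finset (Fin n)) (i : Fin n) (hi : i ∉ T)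
    (x : Fin n → Bool) :
    parity n (insert i T) x = (if x i then (-1:ℝ) else 1) * parity n T x := by
  unfold parity
  rw [Finset.filter_insert]
  cases hxi : x i
  · simp [hxi]
  · rw [if_pos rfl,
      Finset.card_insert_of_notMem (fun h => hi (Finset.mem_filter.mp h).1), pow_succ]
    simp only [if_true]
    ring

-- (iv) Fourier coefficient of derivative
lemma fourierHat_dderiv (n : ℕ) (f : (Fin n → Bool) → ℝ) (i : Fin n)
    (T : Finset (Fin n)) (hi : i ∉ T) :
    fourierHat n f (insert i T) = - fourierHat n (dderiv n f i) T := by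
  unfold fourierHat expect
  rw [← neg_div, ← Finset.sum_neg_distrib]
  congr 1
  have key := pairing_sum n i (fun x => f x * parity n (insert i T) x)
  have h1 : ∀ x : Fin n → Bool,
      (fun x => f x * parity n (insert i T) x) (Function.update x i true)
        + (fun x => f x * parity n (insert i T) x) (Function.update x i false)
      = 2 * (-(dderiv n f i x * parity n T x)) := by
    intro x
    simp only
    rw [parity_insert n T i hi, parity_insert n T i hi,
      Function.update_self, Function.update_self,
      parity_update n T i hi, parity_update n T i hi]
    unfold dderiv
    norm_num
    ring
  rw [Finset.sum_congr rfl (fun x _ => h1 x), ← Finset.mul_sum] at key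
  have h2 : ∑ x : Fin n → Bool, f x * parity n (insert i T) x
      = ∑ x : Fin n → Bool, -(dderiv n f i x * parity n T x) := by
    have := key
    linarith
  rw [h2]

lemma influence_nonneg (n : ℕ) (κ : ℝ) (f : (Fin n → Bool) → ℝ) (i : Fin n) :
    0 ≤ influence n κ f i :=
  expect_nonneg n _ fun x => Real.rpow_nonneg (abs_nonneg _) _

lemma key_i {κ : ℝ} (hκ1 : 1 < κ) (hκ2 : κ < 2) (n : ℕ) (f : (Fin n → Bool) → ℝ)
    (d : ℕ) (hd : 1 ≤ d) (i : Fin n) :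
    ∑ S ∈ Finset.univ.filter (fun S : Finset (Fin n) => i ∈ S ∧ S.card ≤ d),
        (fourierHat n f S) ^ 2 ≤
      (κ - 1) ^ ((1:ℝ) - (d:ℝ)) * (influence n κ f i) ^ (2/κ) := by
  have hκ1' : (0:ℝ) < κ - 1 := by linarith
  have hbij : ∑ S ∈ Finset.univ.filter (fun S : Finset (Fin n) => i ∈ S ∧ S.card ≤ d),
      (fourierHat n f S) ^ 2
      = ∑ T ∈ Finset.univ.filter (fun T : Finset (Fin n) => i ∉ T ∧ T.card + 1 ≤ d),
        (fourierHat n (dderiv n f i) T) ^ 2 := by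
    refine Finset.sum_bij' (fun S _ => S.erase i) (fun T _ => insert i T) ?_ ?_ ?_ ?_ ?_
    · intro S hS
      rw [Finset.mem_filter] at hS ⊢
      obtain ⟨_, hiS, hcard⟩ := hS
      refine ⟨Finset.mem_univ _, Finset.notMem_erase i S, ?_⟩
      rw [Finset.card_erase_of_mem hiS]
      have : 1 ≤ S.card := Finset.card_pos.mpr ⟨i, hiS⟩
      omega
    · intro T hT
      rw [Finset.mem_filter] at hT ⊢
      obtain ⟨_, hiT, hcard⟩ := hT
      refine ⟨Finset.mem_univ _, Finset.mem_insert_self i T, ?_⟩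
      rw [Finset.card_insert_of_notMem hiT]
      omega
    · intro S hS
      rw [Finset.mem_filter] at hS
      exact Finset.insert_erase hS.2.1
    · intro T hT
      rw [Finset.mem_filter] at hT
      exact Finset.erase_insert hT.2.1
    · intro S hS
      rw [Finset.mem_filter] at hS
      have h1 : insert i (S.erase i) = S := Finset.insert_erase hS.2.1
      have h2 := fourierHat_dderiv n f i (S.erase i) (Finset.notMem_erase i S)
      rw [h1] at h2
      rw [h2, neg_sq]
  rw [hbij]
  have hkey := hc_ineq hκ1 hκ2 n (dderiv n f i)
  have hpos : (0:ℝ) < (κ - 1) ^ (d - 1) := pow_pos hκ1' _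
  have h2 : (κ - 1) ^ (d - 1) *
      ∑ T ∈ Finset.univ.filter (fun T : Finset (Fin n) => i ∉ T ∧ T.card + 1 ≤ d),
        (fourierHat n (dderiv n f i) T) ^ 2 ≤ (influence n κ f i) ^ (2/κ) := by
    rw [Finset.mul_sum]
    calc ∑ T ∈ Finset.univ.filter (fun T : Finset (Fin n) => i ∉ T ∧ T.card + 1 ≤ d),
          (κ - 1) ^ (d - 1) * (fourierHat n (dderiv n f i) T) ^ 2
        ≤ ∑ T ∈ Finset.univ.filter (fun T : Finset (Fin n) => i ∉ T ∧ T.card + 1 ≤ d),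
          (κ - 1) ^ T.card * (fourierHat n (dderiv n f i) T) ^ 2 := by
          refine Finset.sum_le_sum fun T hT => ?_
          rw [Finset.mem_filter] at hT
          have hTd : T.card ≤ d - 1 := by omega
          exact mul_le_mul_of_nonneg_right
            (pow_le_pow_of_le_one hκ1'.le (by linarith) hTd) (sq_nonneg _)
      _ ≤ ∑ T : Finset (Fin n), (κ - 1) ^ T.card * (fourierHat n (dderiv n f i) T) ^ 2 :=
          Finset.sum_le_sum_of_subset_of_nonneg (Finset.filter_subset _ _)
            (fun T _ _ => mul_nonneg (pow_nonneg hκ1'.le _) (sq_nonneg _))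
      _ ≤ (expect n (fun x => |dderiv n f i x| ^ κ)) ^ (2/κ) := hkey
      _ = (influence n κ f i) ^ (2/κ) := rfl
  have hrw : (κ - 1) ^ ((1:ℝ) - (d:ℝ)) * (influence n κ f i) ^ (2/κ)
      = ((κ - 1) ^ (d - 1))⁻¹ * (influence n κ f i) ^ (2/κ) := by
    congr 1
    rw [show (1:ℝ) - (d:ℝ) = -((d:ℝ) - 1) by ring, Real.rpow_neg hκ1'.le,
      show (d:ℝ) - 1 = ((d - 1 : ℕ) : ℝ) by push_cast [hd]; ring,
      Real.rpow_natCast]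
  rw [hrw]
  rw [← mul_le_mul_iff_right₀ hpos, ← mul_assoc, mul_inv_cancel₀ hpos.ne', one_mul]
  exact h2


theorem low_influence_fourier_tail_bound (n : ℕ) (f : (Fin n → Bool) → ℝ)
    (κ : ℝ) (hκ₁ : 1 < κ) (hκ₂ : κ < 2) (α : ℝ) (hα : 0 < α) (d : ℕ) (hd : 1 ≤ d)
    (I : Finset (Fin n)) (hI : I = Finset.univ.filter (fun i => α ≤ influence n κ f i)) :
    ∑ S ∈ Finset.univ.filter (fun S : Finset (Fin n) => ¬ S ⊆ I ∧ S.card ≤ d),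
        (fourierHat n f S) ^ 2 ≤
      (κ - 1) ^ ((1 : ℝ) - (d : ℝ)) * α ^ (2 / κ - 1) * ∑ i : Fin n, influence n κ f i := by
  have hκ1' : (0:ℝ) < κ - 1 := by linarith
  set c : Finset (Fin n) → ℝ := fun S => (fourierHat n f S) ^ 2 with hc
  set A := Finset.univ.filter (fun S : Finset (Fin n) => ¬ S ⊆ I ∧ S.card ≤ d) with hA
  set B : Fin n → ℝ :=
    fun i => (κ-1) ^ ((1:ℝ)-(d:ℝ)) * (α ^ (2/κ-1) * influence n κ f i) with hB
  have hrp1 : (0:ℝ) ≤ (κ-1) ^ ((1:ℝ)-(d:ℝ)) := Real.rpow_nonneg hκ1'.le _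
  have hrp2 : (0:ℝ) ≤ α ^ (2/κ-1) := Real.rpow_nonneg hα.le _
  have hBnn : ∀ i, 0 ≤ B i := fun i =>
    mul_nonneg hrp1 (mul_nonneg hrp2 (influence_nonneg n κ f i))
  have hstep : ∀ i : Fin n, i ∉ I → ∑ S ∈ A.filter (fun S => i ∈ S), c S ≤ B i := by
    intro i hiI
    have h1 : A.filter (fun S => i ∈ S) ⊆
        Finset.univ.filter (fun S : Finset (Fin n) => i ∈ S ∧ S.card ≤ d) := by
      intro S hS
      rw [Finset.mem_filter] at hS
      rw [hA, Finset.mem_filter] at hS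
      rcases hS with ⟨⟨_, _, hcard⟩, hiS⟩
      rw [Finset.mem_filter]
      exact ⟨Finset.mem_univ _, hiS, hcard⟩
    have h2 : ∑ S ∈ A.filter (fun S => i ∈ S), c S ≤
        ∑ S ∈ Finset.univ.filter (fun S : Finset (Fin n) => i ∈ S ∧ S.card ≤ d), c S :=
      Finset.sum_le_sum_of_subset_of_nonneg h1 (fun S _ _ => sq_nonneg _)
    have h3 := key_i hκ₁ hκ₂ n f d hd i
    have hinf : influence n κ f i < α := by
      rw [hI] at hiI
      rw [Finset.mem_filter] at hiI
      push_neg at hiI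
      exact hiI (Finset.mem_univ _)
    have h4 : (influence n κ f i) ^ (2/κ) ≤ α ^ (2/κ-1) * influence n κ f i := by
      rcases eq_or_lt_of_le (influence_nonneg n κ f i) with h0 | h0
      · rw [← h0, Real.zero_rpow (by positivity : 2/κ ≠ 0), mul_zero]
      · have hexp : (0:ℝ) ≤ 2/κ - 1 := by
          rw [sub_nonneg, le_div_iff₀ (by linarith : (0:ℝ) < κ)]
          linarith
        calc (influence n κ f i) ^ (2/κ)
            = (influence n κ f i) ^ (2/κ - 1) * influence n κ f i := by
              nth_rewrite 3 [← Real.rpow_one (influence n κ f i)]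
              rw [← Real.rpow_add h0]
              norm_num
          _ ≤ α ^ (2/κ-1) * influence n κ f i :=
              mul_le_mul_of_nonneg_right
                (Real.rpow_le_rpow (influence_nonneg n κ f i) hinf.le hexp)
                (influence_nonneg n κ f i)
    calc ∑ S ∈ A.filter (fun S => i ∈ S), c S
        ≤ (κ-1) ^ ((1:ℝ)-(d:ℝ)) * (influence n κ f i) ^ (2/κ) := le_trans h2 h3
      _ ≤ B i := mul_le_mul_of_nonneg_left h4 hrp1
  calc ∑ S ∈ A, c S
      ≤ ∑ S ∈ A, ∑ i ∈ S \ I, c S := by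
        refine Finset.sum_le_sum fun S hS => ?_
        rw [Finset.sum_const, nsmul_eq_mul]
        refine le_mul_of_one_le_left (sq_nonneg _) ?_
        have hne : (S \ I).Nonempty := by
          rw [Finset.sdiff_nonempty]
          rw [hA, Finset.mem_filter] at hS
          exact hS.2.1
        exact_mod_cast Nat.one_le_iff_ne_zero.mpr (Finset.card_ne_zero_of_mem hne.choose_spec)
    _ = ∑ S ∈ A, ∑ i : Fin n, (if i ∈ S \ I then c S else 0) := by
        refine Finset.sum_congr rfl fun S _ => ?_
        rw [Finset.sum_ite_mem, Finset.univ_inter]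
    _ = ∑ i : Fin n, ∑ S ∈ A, (if i ∈ S \ I then c S else 0) := Finset.sum_comm
    _ ≤ ∑ i : Fin n, B i := by
        refine Finset.sum_le_sum fun i _ => ?_
        by_cases hiI : i ∈ I
        · have : ∑ S ∈ A, (if i ∈ S \ I then c S else 0) = 0 := by
            refine Finset.sum_eq_zero fun S _ => ?_
            rw [if_neg]
            rw [Finset.mem_sdiff]
            exact fun h => h.2 hiI
          rw [this]
          exact hBnn i
        · have heq : ∑ S ∈ A, (if i ∈ S \ I then c S else 0)
              = ∑ S ∈ A.filter (fun S => i ∈ S), c S := by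
            conv_rhs => rw [Finset.sum_filter]
            refine Finset.sum_congr rfl fun S _ => ?_
            congr 1
            rw [eq_iff_iff, Finset.mem_sdiff]
            exact ⟨fun h => h.1, fun h => ⟨h, hiI⟩⟩
          rw [heq]
          exact hstep i hiI
    _ = (κ - 1) ^ ((1 : ℝ) - (d : ℝ)) * α ^ (2 / κ - 1) * ∑ i : Fin n, influence n κ f i := by
        rw [hB, ← Finset.mul_sum, ← Finset.mul_sum, ← mul_assoc]
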